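/- (Achievable worst-case redundancy for a fixed quantizer.) Let Λ be a family of probability measures on X, d > 0 and n ≥ 1. Let π ∈ Q_n(d), choose for each cell A ∈ π a prototype y_A ∈ A with ρ_n(x^n, y_A) ≤ d for all x^n ∈ A, and define the quantizer φ by φ(x^n) = y_A for x^n ∈ A. Then for every ε > 0 there exists a codeword-length function ℓ on B = {y_A : A ∈ π} satisfying the Kraft inequality such that sup_{μ ∈ Λ} [R((φ, ℓ), μ^n) − R_n(d, μ^n)] ≤ (1/n)·( R⁺(Λ^n, σ(π)) + sup_{μ ∈ Λ} [H_{σ(π)}(μ^n) − n·R_n(d, μ^n)] + 1 ) + ε (where the inequality holds trivially if the right-hand side is +∞). -/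

import Mathlib

open Filter Topology
open scoped ENNReal NNReal BigOperators

noncomputable section

/-- Block (single-letter) distortion `ρ_n` on `Fin n → α`. -/
def blockDist {α : Type*} (ρ : α → α → ℝ) (n : ℕ) (x y : Fin n → α) : ℝ :=
  (∑ i, ρ (x i) (y i)) / n

/-- `π` is a (countable) partition: nonempty cells, every point in exactly one cell. -/
def IsPartition {α : Type*} (π : Set (Set α)) : Prop :=
  (∀ s ∈ π, s.Nonempty) ∧ ∀ x : α, ∃! s, s ∈ π ∧ x ∈ s

/-- `Q_n(d)`: partitions whose every cell contains a prototype within distortion `d`. -/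
def QPart {α : Type*} (ρ : α → α → ℝ) (n : ℕ) (d : ℝ) (π : Set (Set (Fin n → α))) : Prop :=
  IsPartition π ∧ ∀ A ∈ π, ∃ y ∈ A, ∀ x ∈ A, blockDist ρ n x y ≤ d

/-- Measure of a set under a pmf. -/
def measOf {α : Type*} (p : α → ℝ≥0∞) (s : Set α) : ℝ≥0∞ := ∑' x : s, p x.1

/-- `entTerm t = t·log₂(1/t) ∈ [0,∞]`, with the convention `0·log 0 = 0`. -/
def entTerm (t : ℝ≥0∞) : ℝ≥0∞ := ENNReal.ofReal (-(t.toReal * Real.logb 2 t.toReal))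

/-- Entropy of `p` restricted to the σ-field generated by the partition `π` (base 2). -/
def Hpart {α : Type*} (π : Set (Set α)) (p : α → ℝ≥0∞) : ℝ≥0∞ :=
  ∑' A : π, entTerm (measOf p A.1)

/-- Shannon entropy of a pmf (base 2). -/
def Hent {α : Type*} (p : α → ℝ≥0∞) : ℝ≥0∞ := ∑' x, entTerm (p x)

/-- Nonnegative per-cell KL term `(a log(a/b) − a + b)/log 2`; summed over a partition and
probability vectors (`∑ a = ∑ b = 1`) this gives exactly `∑ a log₂(a/b) ∈ [0,∞]` with the
usual conventions (`0·log(0/q) = 0`, `p·log(p/0) = ∞` for `p > 0`). -/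
def klTerm (a b : ℝ≥0∞) : ℝ≥0∞ :=
  if a = 0 then ENNReal.ofReal (b.toReal / Real.log 2)
  else if b = 0 then ⊤
  else ENNReal.ofReal
    ((a.toReal * Real.log (a.toReal / b.toReal) - a.toReal + b.toReal) / Real.log 2)

/-- Divergence `D_{σ(π)}(p‖q) ∈ [0,∞]` restricted to the cells of `π` (base 2). -/
def Dpart {α : Type*} (π : Set (Set α)) (p q : α → ℝ≥0∞) : ℝ≥0∞ :=
  ∑' A : π, klTerm (measOf p A.1) (measOf q A.1)

/-- `p` is a probability mass function. -/
def IsPMF {α : Type*} (p : α → ℝ≥0∞) : Prop := ∑' a, p a = 1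

/-- `n`-fold i.i.d. product pmf `μ^n`. -/
def prodPMF {α : Type*} (p : α → ℝ≥0∞) (n : ℕ) : (Fin n → α) → ℝ≥0∞ :=
  fun x => ∏ i, p (x i)

/-- `Λ^n = {μ^n : μ ∈ Λ}`. -/
def prodFam {α : Type*} (Λ : Set (α → ℝ≥0∞)) (n : ℕ) : Set ((Fin n → α) → ℝ≥0∞) :=
  (fun μ => prodPMF μ n) '' Λ

/-- Operational rate `R_n(d, μ_n) = inf_{π ∈ Q_n(d)} H_{σ(π)}(μ_n)/n`. -/
def opRate {α : Type*} (ρ : α → α → ℝ) (n : ℕ) (d : ℝ) (μn : (Fin n → α) → ℝ≥0∞) : ℝ≥0∞ :=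
  ⨅ π ∈ {π | QPart ρ n d π}, Hpart π μn / (n : ℝ≥0∞)

/-- Kraft inequality for a codeword-length function on `B`. -/
def Kraft {β : Type*} (B : Set β) (ℓ : β → ℕ) : Prop :=
  (∑' y : B, (2⁻¹ : ℝ≥0∞) ^ ℓ y.1) ≤ 1

/-- D-semifaithful code `ξ_n = (φ, ℓ)` of length `n` operating at distortion `d`. -/
def IsCode {α : Type*} (ρ : α → α → ℝ) (n : ℕ) (d : ℝ)
    (φ : (Fin n → α) → Fin n → α) (ℓ : (Fin n → α) → ℕ) : Prop :=
  (∀ x, blockDist ρ n x (φ x) ≤ d) ∧ (∀ y ∈ Set.range φ, φ y = y) ∧ Kraft (Set.range φ) ℓ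

/-- Rate (bits per letter) of the code `(φ, ℓ)` under `μn`. -/
def codeRate {α : Type*} {n : ℕ} (φ : (Fin n → α) → Fin n → α) (ℓ : (Fin n → α) → ℕ)
    (μn : (Fin n → α) → ℝ≥0∞) : ℝ≥0∞ :=
  (∑' x, μn x * (ℓ (φ x) : ℝ≥0∞)) / (n : ℝ≥0∞)

/-- Partition of the block space induced by a quantizer. -/
def codePart {α : Type*} {n : ℕ} (φ : (Fin n → α) → Fin n → α) : Set (Set (Fin n → α)) :=
  {s | ∃ y ∈ Set.range φ, s = φ ⁻¹' {y}}

/-- Information radius `R⁺(Λn, σ(π)) = inf_v sup_{μn ∈ Λn} D_{σ(π)}(μn‖v)`. -/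
def Rplus {β : Type*} (Λn : Set (β → ℝ≥0∞)) (π : Set (Set β)) : ℝ≥0∞ :=
  ⨅ v : {v : β → ℝ≥0∞ // IsPMF v}, ⨆ μn ∈ Λn, Dpart π μn v.1

/-- A distortion function: nonnegative and positive off the diagonal. -/
def IsDistortion {α : Type*} (ρ : α → α → ℝ) : Prop :=
  (∀ x y, 0 ≤ ρ x y) ∧ ∀ x y, x ≠ y → 0 < ρ x y

/-- Unbounded distortion consistent w.r.t. the Euclidean norm on the alphabet ℕ. -/
def ConsistentUnbounded (ρ : ℕ → ℕ → ℝ) : Prop :=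
  ∀ K : ℝ, 0 < K → ∃ ε : ℝ, 0 < ε ∧ ∀ i j : ℕ, ε ≤ |(i : ℝ) - (j : ℝ)| → K ≤ ρ i j

/-- Envelope family `Λ_f`. -/
def envFam (f : ℕ → ℝ≥0) : Set (ℕ → ℝ≥0∞) :=
  {p | IsPMF p ∧ ∀ x, p x ≤ (f x : ℝ≥0∞)}

/-- Tail set `T_k = {k, k+1, ...}`. -/
def Tset (k : ℕ) : Set ℕ := {x | k ≤ x}

/-- Tail sum of the envelope `∑_{x ≥ k} f(x)`. -/
def tailF (f : ℕ → ℝ≥0) (k : ℕ) : ℝ≥0∞ := ∑' x : Tset k, (f x.1 : ℝ≥0∞)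

/-- `τ_f = min{k ≥ 1 : ∑_{x ≥ k} f(x) ≤ 1}`. -/
def tauF (f : ℕ → ℝ≥0) : ℕ := sInf {k | 1 ≤ k ∧ tailF f k ≤ 1}

/-- The envelope distribution `μ̃_f`. -/
def mutilde (f : ℕ → ℝ≥0) : ℕ → ℝ≥0∞ := fun x =>
  if tauF f ≤ x then (f x : ℝ≥0∞)
  else if x = tauF f - 1 then 1 - tailF f (tauF f)
  else 0

/-- `u_f(n) = min{k ≥ 1 : μ̃_f(T_{k+1}) < 1/n}`. -/
def ufn (f : ℕ → ℝ≥0) (n : ℕ) : ℕ :=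
  sInf {k | 1 ≤ k ∧ measOf (mutilde f) (Tset (k + 1)) < (n : ℝ≥0∞)⁻¹}

/-- Tail-partition entropy `H_{σ(π̃_k)}(p)` for the partition `π̃_k = {Γ_k, {k+1}, {k+2}, ...}`. -/
def Htail (k : ℕ) (p : ℕ → ℝ≥0∞) : ℝ≥0∞ :=
  entTerm (measOf p (Set.Iic k)) + ∑' x : Tset (k + 1), entTerm (p x.1)
namespace AuxRed

def c2 : ℝ≥0∞ := ENNReal.ofReal (Real.log 2)⁻¹

def lenOf (q : ℝ≥0∞) : ℕ := ⌈Real.logb 2 (q.toReal)⁻¹⌉₊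

lemma log2_pos : (0:ℝ) < Real.log 2 := Real.log_pos one_lt_two

lemma ne_top_of_le_one {a : ℝ≥0∞} (ha : a ≤ 1) : a ≠ ⊤ :=
  ne_top_of_le_ne_top ENNReal.one_ne_top ha

lemma toReal_le_one {a : ℝ≥0∞} (ha : a ≤ 1) : a.toReal ≤ 1 := by
  rw [← ENNReal.toReal_one]; exact ENNReal.toReal_mono ENNReal.one_ne_top ha

lemma c2_ne_top : c2 ≠ ⊤ := ENNReal.ofReal_ne_top

lemma mul_c2 {a : ℝ≥0∞} (ha : a ≠ ⊤) :
    a * c2 = ENNReal.ofReal (a.toReal * (Real.log 2)⁻¹) := by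
  rw [ENNReal.ofReal_mul ENNReal.toReal_nonneg, ENNReal.ofReal_toReal ha, c2]

lemma klR_nonneg {x y : ℝ} (hx : 0 < x) (hy : 0 < y) :
    0 ≤ (x * Real.log (x / y) - x + y) / Real.log 2 := by
  apply div_nonneg _ log2_pos.le
  have h := Real.log_le_sub_one_of_pos (show 0 < y/x by positivity)
  have h2 : x * Real.log (y / x) ≤ y - x := by
    calc x * Real.log (y/x) ≤ x * (y/x - 1) := mul_le_mul_of_nonneg_left h hx.le
      _ = y - x := by field_simp
  have hlog : Real.log (x / y) = - Real.log (y / x) := by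
    rw [← Real.log_inv]; congr 1; rw [inv_div]
  nlinarith [h2]

lemma identity {a b : ℝ≥0∞} (ha : a ≤ 1) (hb0 : b ≠ 0) (hb : b ≤ 1) :
    ENNReal.ofReal (a.toReal * Real.logb 2 (b.toReal)⁻¹) + b * c2
      = klTerm a b + entTerm a + a * c2 := by
  have haT : a ≠ ⊤ := ne_top_of_le_one ha
  have hbT : b ≠ ⊤ := ne_top_of_le_one hb
  have hy : 0 < b.toReal := ENNReal.toReal_pos hb0 hbT
  have hy1 : b.toReal ≤ 1 := toReal_le_one hb
  rw [mul_c2 haT, mul_c2 hbT]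
  rcases eq_or_ne a 0 with rfl | ha0
  · simp [klTerm, entTerm, div_eq_mul_inv]
  · have hx : 0 < a.toReal := ENNReal.toReal_pos ha0 haT
    have hx1 : a.toReal ≤ 1 := toReal_le_one ha
    set x := a.toReal
    set y := b.toReal
    have A1 : 0 ≤ x * Real.logb 2 y⁻¹ :=
      mul_nonneg hx.le (Real.logb_nonneg one_lt_two ((one_le_inv₀ hy).mpr hy1))
    have A2 : 0 ≤ y * (Real.log 2)⁻¹ := by positivity
    have B1 : 0 ≤ (x * Real.log (x / y) - x + y) / Real.log 2 := klR_nonneg hx hy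
    have B2 : 0 ≤ -(x * Real.logb 2 x) := by
      have := Real.logb_nonpos one_lt_two hx.le hx1
      nlinarith
    have B3 : 0 ≤ x * (Real.log 2)⁻¹ := by positivity
    rw [klTerm, if_neg ha0, if_neg hb0, entTerm]
    rw [← ENNReal.ofReal_add A1 A2, ← ENNReal.ofReal_add B1 B2,
        ← ENNReal.ofReal_add (add_nonneg B1 B2) B3]
    congr 1
    rw [Real.logb, Real.logb, Real.log_inv, Real.log_div hx.ne' hy.ne']
    field_simp
    ring

lemma lenOf_le {q : ℝ≥0∞} (hq0 : q ≠ 0) (hq1 : q ≤ 1) :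
    (lenOf q : ℝ≥0∞) ≤ 1 + ENNReal.ofReal (Real.logb 2 (q.toReal)⁻¹) := by
  have hy : 0 < q.toReal := ENNReal.toReal_pos hq0 (ne_top_of_le_one hq1)
  have hx : (0:ℝ) ≤ Real.logb 2 (q.toReal)⁻¹ :=
    Real.logb_nonneg one_lt_two ((one_le_inv₀ hy).mpr (toReal_le_one hq1))
  have h := (Nat.ceil_lt_add_one hx).le
  calc (lenOf q : ℝ≥0∞) = ENNReal.ofReal (lenOf q : ℝ) := by
        simp [ENNReal.ofReal_natCast]
    _ ≤ ENNReal.ofReal (Real.logb 2 (q.toReal)⁻¹ + 1) := ENNReal.ofReal_le_ofReal h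
    _ = 1 + ENNReal.ofReal (Real.logb 2 (q.toReal)⁻¹) := by
        rw [ENNReal.ofReal_add hx zero_le_one, ENNReal.ofReal_one, add_comm]

lemma kraft_term {q : ℝ≥0∞} (hq0 : q ≠ 0) (hq1 : q ≤ 1) :
    (2⁻¹ : ℝ≥0∞) ^ (lenOf q) ≤ q := by
  have hqT : q ≠ ⊤ := ne_top_of_le_one hq1
  have hy : 0 < q.toReal := ENNReal.toReal_pos hq0 hqT
  have hceil : Real.logb 2 (q.toReal)⁻¹ ≤ (lenOf q : ℝ) := Nat.le_ceil _
  have h2 : (q.toReal)⁻¹ ≤ (2:ℝ) ^ (lenOf q : ℕ) := by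
    have := Real.rpow_le_rpow_of_exponent_le (one_le_two) hceil
    rwa [Real.rpow_logb two_pos (by norm_num) (by positivity), Real.rpow_natCast] at this
  have h3 : ((2:ℝ) ^ (lenOf q : ℕ))⁻¹ ≤ q.toReal := by
    rw [inv_le_comm₀ (by positivity) hy]
    exact h2
  calc (2⁻¹ : ℝ≥0∞) ^ (lenOf q) = ENNReal.ofReal ((2⁻¹:ℝ) ^ (lenOf q : ℕ)) := by
        rw [ENNReal.ofReal_pow (by norm_num : (0:ℝ) ≤ 2⁻¹)]
        congr 1
        rw [ENNReal.ofReal_inv_of_pos two_pos, ENNReal.ofReal_ofNat]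
    _ ≤ ENNReal.ofReal q.toReal := by
        apply ENNReal.ofReal_le_ofReal
        rwa [inv_pow]
    _ = q := ENNReal.ofReal_toReal hqT

lemma neg_log_le {δ : ℝ} (hδ0 : 0 < δ) (hδ1 : δ ≤ 1/2) :
    -Real.log (1 - δ) ≤ 2 * δ := by
  have h1 : (0:ℝ) < 1 - δ := by linarith
  have h := Real.log_le_sub_one_of_pos (show (0:ℝ) < (1-δ)⁻¹ by positivity)
  rw [Real.log_inv] at h
  have : (1-δ)⁻¹ ≤ 1 + 2*δ := by
    rw [inv_le_iff_one_le_mul₀ h1]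
    nlinarith
  linarith

lemma kl_mix {a b w : ℝ≥0∞} (ha : a ≤ 1) (hb : b ≤ 1) (hw : w ≤ 1)
    {δ : ℝ} (hδ0 : 0 < δ) (hδ1 : δ ≤ 1/2) :
    klTerm a (ENNReal.ofReal (1-δ) * b + ENNReal.ofReal δ * w)
      ≤ klTerm a b + a * ENNReal.ofReal (2*δ) * c2 + ENNReal.ofReal δ * w * c2 := by
  have haT : a ≠ ⊤ := ne_top_of_le_one ha
  have hbT : b ≠ ⊤ := ne_top_of_le_one hb
  have hwT : w ≠ ⊤ := ne_top_of_le_one hw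
  set b' := ENNReal.ofReal (1-δ) * b + ENNReal.ofReal δ * w with hb'def
  have h1δ : (0:ℝ) < 1 - δ := by linarith
  have hb'T : b' ≠ ⊤ := by
    simp [hb'def, ENNReal.add_ne_top, ENNReal.mul_ne_top, hbT, hwT, ENNReal.ofReal_ne_top]
  have hb'R : b'.toReal = (1-δ) * b.toReal + δ * w.toReal := by
    rw [hb'def, ENNReal.toReal_add (by finiteness) (by finiteness),
      ENNReal.toReal_mul, ENNReal.toReal_mul, ENNReal.toReal_ofReal h1δ.le,
      ENNReal.toReal_ofReal hδ0.le]
  have hwc : ENNReal.ofReal δ * w * c2 = ENNReal.ofReal (δ * w.toReal * (Real.log 2)⁻¹) := by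
    rw [ENNReal.ofReal_mul (by positivity), ENNReal.ofReal_mul hδ0.le,
      ENNReal.ofReal_toReal hwT, c2]
  rcases eq_or_ne a 0 with rfl | ha0
  · rw [klTerm, if_pos rfl, klTerm, if_pos rfl]
    simp only [zero_mul, add_zero]
    rw [hwc]
    calc ENNReal.ofReal (b'.toReal / Real.log 2)
        ≤ ENNReal.ofReal (b.toReal / Real.log 2 + δ * w.toReal * (Real.log 2)⁻¹) := by
          apply ENNReal.ofReal_le_ofReal
          rw [hb'R]
          rw [div_eq_mul_inv, div_eq_mul_inv]
          have : (0:ℝ) ≤ (Real.log 2)⁻¹ := by positivity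
          nlinarith [mul_nonneg (mul_nonneg hδ0.le (ENNReal.toReal_nonneg (a := b))) this]
      _ ≤ ENNReal.ofReal (b.toReal / Real.log 2) + ENNReal.ofReal (δ * w.toReal * (Real.log 2)⁻¹) :=
          ENNReal.ofReal_add_le
      _ ≤ _ := le_rfl
  · rcases eq_or_ne b 0 with rfl | hb0
    · have hk : klTerm a 0 = ⊤ := by rw [klTerm, if_neg ha0]; simp
      rw [hk]
      simp
    · have hx : 0 < a.toReal := ENNReal.toReal_pos ha0 haT
      have hy : 0 < b.toReal := ENNReal.toReal_pos hb0 hbT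
      have hb'0 : b' ≠ 0 := by
        rw [hb'def]
        intro h
        rcases add_eq_zero.mp h with ⟨h1, _⟩
        rcases mul_eq_zero.mp h1 with h | h
        · exact absurd (ENNReal.ofReal_eq_zero.mp h) (by linarith)
        · exact hb0 h
      have hy' : 0 < b'.toReal := by
        rw [hb'R]; positivity
      rw [klTerm, if_neg ha0, if_neg hb'0, klTerm, if_neg ha0, if_neg hb0]
      have hac : a * ENNReal.ofReal (2*δ) * c2
          = ENNReal.ofReal (a.toReal * (2*δ) * (Real.log 2)⁻¹) := by
        conv_lhs => rw [← ENNReal.ofReal_toReal haT]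
        rw [c2, ← ENNReal.ofReal_mul ENNReal.toReal_nonneg, ← ENNReal.ofReal_mul (by positivity)]
      rw [hac, hwc]
      set x := a.toReal; set y := b.toReal; set z := w.toReal
      have key : (x * Real.log (x / b'.toReal) - x + b'.toReal) / Real.log 2
          ≤ (x * Real.log (x / y) - x + y) / Real.log 2 + x * (2*δ) * (Real.log 2)⁻¹
            + δ * z * (Real.log 2)⁻¹ := by
        have hlog : Real.log (x / b'.toReal) ≤ Real.log (x / y) + 2*δ := by
          have hle : x / b'.toReal ≤ x / ((1-δ)*y) := by
            apply div_le_div_of_nonneg_left hx.le (by positivity)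
            rw [hb'R]
            nlinarith [ENNReal.toReal_nonneg (a := w)]
          calc Real.log (x / b'.toReal) ≤ Real.log (x / ((1-δ)*y)) :=
                Real.log_le_log (by positivity) hle
            _ = Real.log (x/y) + -Real.log (1-δ) := by
                rw [Real.log_div hx.ne' (by positivity), Real.log_mul h1δ.ne' hy.ne',
                  Real.log_div hx.ne' hy.ne']
                ring
            _ ≤ Real.log (x/y) + 2*δ := by
                have := neg_log_le hδ0 hδ1
                linarith
        have hble : b'.toReal ≤ y + δ * z := by
          rw [hb'R]; nlinarith
        have hnum : x * Real.log (x / b'.toReal) - x + b'.toReal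
            ≤ (x * Real.log (x/y) - x + y) + x*(2*δ) + δ*z := by
          have hmul := mul_le_mul_of_nonneg_left hlog hx.le
          nlinarith
        calc (x * Real.log (x / b'.toReal) - x + b'.toReal) / Real.log 2
            ≤ ((x * Real.log (x/y) - x + y) + x*(2*δ) + δ*z) / Real.log 2 := by
              gcongr
          _ = (x * Real.log (x/y) - x + y)/Real.log 2 + x*(2*δ)*(Real.log 2)⁻¹
              + δ*z*(Real.log 2)⁻¹ := by
              field_simp
      calc ENNReal.ofReal ((x * Real.log (x / b'.toReal) - x + b'.toReal) / Real.log 2)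
          ≤ ENNReal.ofReal ((x * Real.log (x / y) - x + y) / Real.log 2
              + x * (2*δ) * (Real.log 2)⁻¹ + δ * z * (Real.log 2)⁻¹) :=
            ENNReal.ofReal_le_ofReal key
        _ ≤ _ := by
            refine le_trans ENNReal.ofReal_add_le (add_le_add ENNReal.ofReal_add_le le_rfl)

lemma core {ι : Type*} (p q : ι → ℝ≥0∞) (hp : ∑' i, p i = 1)
    (hq0 : ∀ i, q i ≠ 0) (hq1 : ∀ i, q i ≤ 1) :
    (∑' i, p i * (lenOf (q i) : ℝ≥0∞)) + (∑' i, q i) * c2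
      ≤ (∑' i, klTerm (p i) (q i)) + (∑' i, entTerm (p i)) + 1 + c2 := by
  have hp1 : ∀ i, p i ≤ 1 := fun i => hp ▸ ENNReal.le_tsum i
  set L := fun i => ENNReal.ofReal ((p i).toReal * Real.logb 2 ((q i).toReal)⁻¹) with hL
  have hpL : ∀ i, p i * ENNReal.ofReal (Real.logb 2 ((q i).toReal)⁻¹) = L i := by
    intro i
    rw [hL]
    conv_lhs => rw [← ENNReal.ofReal_toReal (ne_top_of_le_one (hp1 i))]
    rw [← ENNReal.ofReal_mul ENNReal.toReal_nonneg]
  have step1 : (∑' i, p i * (lenOf (q i) : ℝ≥0∞)) ≤ 1 + ∑' i, L i := by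
    calc (∑' i, p i * (lenOf (q i) : ℝ≥0∞))
        ≤ ∑' i, (p i + p i * ENNReal.ofReal (Real.logb 2 ((q i).toReal)⁻¹)) := by
          apply ENNReal.tsum_le_tsum
          intro i
          calc p i * (lenOf (q i) : ℝ≥0∞)
              ≤ p i * (1 + ENNReal.ofReal (Real.logb 2 ((q i).toReal)⁻¹)) :=
                mul_le_mul_right (lenOf_le (hq0 i) (hq1 i)) _
            _ = p i + p i * ENNReal.ofReal (Real.logb 2 ((q i).toReal)⁻¹) := by
                rw [mul_add, mul_one]
      _ = 1 + ∑' i, L i := by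
          rw [ENNReal.tsum_add, hp]
          congr 1
          exact tsum_congr hpL
  have step2 : (∑' i, L i) + (∑' i, q i) * c2
      = (∑' i, klTerm (p i) (q i)) + (∑' i, entTerm (p i)) + c2 := by
    have h := tsum_congr (L := SummationFilter.unconditional ι) (fun i => identity (hp1 i) (hq0 i) (hq1 i))
    calc (∑' i, L i) + (∑' i, q i) * c2
        = ∑' i, (L i + q i * c2) := by rw [ENNReal.tsum_add, ENNReal.tsum_mul_right]
      _ = ∑' i, (klTerm (p i) (q i) + entTerm (p i) + p i * c2) := h
      _ = (∑' i, klTerm (p i) (q i)) + (∑' i, entTerm (p i)) + (∑' i, p i) * c2 := by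
          rw [ENNReal.tsum_add, ENNReal.tsum_add, ENNReal.tsum_mul_right]
      _ = _ := by rw [hp, one_mul]
  calc (∑' i, p i * (lenOf (q i) : ℝ≥0∞)) + (∑' i, q i) * c2
      ≤ (1 + ∑' i, L i) + (∑' i, q i) * c2 := add_le_add_left step1 _
    _ = 1 + ((∑' i, L i) + (∑' i, q i) * c2) := by ring
    _ = 1 + ((∑' i, klTerm (p i) (q i)) + (∑' i, entTerm (p i)) + c2) := by rw [step2]
    _ = (∑' i, klTerm (p i) (q i)) + (∑' i, entTerm (p i)) + 1 + c2 := by ring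

lemma kraft_core {ι : Type*} (q : ι → ℝ≥0∞) (hq0 : ∀ i, q i ≠ 0) (hq1 : ∀ i, q i ≤ 1) :
    (∑' i, (2⁻¹ : ℝ≥0∞) ^ (lenOf (q i))) ≤ ∑' i, q i :=
  ENNReal.tsum_le_tsum fun i => kraft_term (hq0 i) (hq1 i)

variable {α : Type*} {π : Set (Set α)}

def cellS (h : IsPartition π) (x : α) : ↥π :=
  ⟨(h.2 x).exists.choose, (h.2 x).exists.choose_spec.1⟩

lemma mem_cellS (h : IsPartition π) (x : α) : x ∈ (cellS h x).1 :=
  (h.2 x).exists.choose_spec.2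

lemma cellS_eq (h : IsPartition π) {x : α} {A : ↥π} (hx : x ∈ A.1) : cellS h x = A := by
  have h1 := (h.2 x).unique ⟨(cellS h x).2, mem_cellS h x⟩ ⟨A.2, hx⟩
  exact Subtype.ext h1

def sigmaEquiv (h : IsPartition π) : (Σ A : ↥π, ↥A.1) ≃ α where
  toFun := fun z => z.2.1
  invFun := fun x => ⟨cellS h x, ⟨x, mem_cellS h x⟩⟩
  left_inv := by
    rintro ⟨A, x, hx⟩
    have : cellS h x = A := cellS_eq h hx
    subst this
    rfl
  right_inv := fun x => rfl

lemma tsum_partition (h : IsPartition π) (f : α → ℝ≥0∞) :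
    ∑' x, f x = ∑' A : ↥π, ∑' x : ↥A.1, f x.1 := by
  rw [← Equiv.tsum_eq (sigmaEquiv h) f, ENNReal.tsum_sigma']
  rfl

lemma tsum_measOf (h : IsPartition π) (p : α → ℝ≥0∞) :
    ∑' A : ↥π, measOf p A.1 = ∑' x, p x := (tsum_partition h p).symm

lemma measOf_le_one {p : α → ℝ≥0∞} (hp : IsPMF p) (s : Set α) : measOf p s ≤ 1 := by
  rw [← hp]
  exact ENNReal.tsum_comp_le_tsum_of_injective Subtype.val_injective p

lemma measOf_mix (v w : α → ℝ≥0∞) (c c' : ℝ≥0∞) (s : Set α) :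
    measOf (fun x => c * v x + c' * w x) s = c * measOf v s + c' * measOf w s := by
  rw [measOf, ENNReal.tsum_add, ENNReal.tsum_mul_left, ENNReal.tsum_mul_left]
  rfl

lemma prodPMF_isPMF {p : α → ℝ≥0∞} (hp : IsPMF p) (n : ℕ) : IsPMF (prodPMF p n) := by
  induction n with
  | zero =>
    rw [IsPMF, tsum_eq_single (fun i => i.elim0)
      (by intro x hx; exact absurd (funext fun i => i.elim0) hx)]
    simp [prodPMF]
  | succ n ih =>
    rw [IsPMF, ← Equiv.tsum_eq (Fin.consEquiv (fun _ : Fin (n+1) => α))]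
    have hz : ∀ z : α × (Fin n → α),
        prodPMF p (n+1) ((Fin.consEquiv _) z) = p z.1 * prodPMF p n z.2 := by
      rintro ⟨a, x⟩
      simp [prodPMF, Fin.consEquiv, Fin.prod_univ_succ]
    calc ∑' z : α × (Fin n → α), prodPMF p (n+1) ((Fin.consEquiv _) z)
        = ∑' z : α × (Fin n → α), p z.1 * prodPMF p n z.2 := tsum_congr hz
      _ = (∑' a, p a) * (∑' x, prodPMF p n x) := by
          rw [ENNReal.tsum_prod']
          simp_rw [ENNReal.tsum_mul_left]
          rw [ENNReal.tsum_mul_right]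
      _ = 1 := by rw [hp, ih, one_mul]

lemma geom_half_succ : ∑' k : ℕ, (2⁻¹ : ℝ≥0∞) ^ (k + 1) = 1 := by
  calc ∑' k : ℕ, (2⁻¹ : ℝ≥0∞) ^ (k + 1) = ∑' k : ℕ, 2⁻¹ * (2⁻¹ : ℝ≥0∞) ^ k := by
        simp [pow_succ, mul_comm]
    _ = 2⁻¹ * ∑' k : ℕ, (2⁻¹ : ℝ≥0∞) ^ k := ENNReal.tsum_mul_left
    _ = 2⁻¹ * (1 - 2⁻¹)⁻¹ := by rw [ENNReal.tsum_geometric]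
    _ = 1 := by
        rw [ENNReal.one_sub_inv_two, inv_inv]
        exact ENNReal.inv_mul_cancel (by norm_num) (by norm_num)

lemma kraft_exists {β : Type*} [Countable β] (B : Set β) :
    ∃ ℓ : β → ℕ, Kraft B ℓ := by
  obtain ⟨f, hf⟩ := exists_injective_nat β
  refine ⟨fun x => f x + 1, ?_⟩
  unfold Kraft
  calc (∑' y : B, (2⁻¹ : ℝ≥0∞) ^ (f y.1 + 1))
      ≤ ∑' x : β, (2⁻¹ : ℝ≥0∞) ^ (f x + 1) :=
        ENNReal.tsum_comp_le_tsum_of_injective Subtype.val_injective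
          (fun x => (2⁻¹ : ℝ≥0∞) ^ (f x + 1))
    _ ≤ ∑' k : ℕ, (2⁻¹ : ℝ≥0∞) ^ (k + 1) :=
        ENNReal.tsum_comp_le_tsum_of_injective hf (fun k => (2⁻¹ : ℝ≥0∞) ^ (k + 1))
    _ = 1 := geom_half_succ

end AuxRed

open AuxRed

/-- Achievable worst-case redundancy for a fixed quantizer: given `π ∈ Q_n(d)`
and a quantizer `φ` sending every cell `A ∈ π` to a prototype `y_A ∈ A` within distortion `d`,
for every `ε > 0` there is a Kraft length function `ℓ` on the range of `φ` with
`sup_{μ ∈ Λ}[R((φ,ℓ), μ^n) − R_n(d, μ^n)]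
  ≤ (1/n)·(R⁺(Λ^n, σ(π)) + sup_{μ ∈ Λ}[H_{σ(π)}(μ^n) − n·R_n(d, μ^n)] + 1) + ε`. -/
theorem achievable_fixed_quantizer (ρ : ℕ → ℕ → ℝ) (hρ : IsDistortion ρ)
    (d : ℝ) (hd : 0 < d) (n : ℕ) (hn : 1 ≤ n)
    (Λ : Set (ℕ → ℝ≥0∞)) (hΛ : ∀ μ ∈ Λ, IsPMF μ)
    (π : Set (Set (Fin n → ℕ))) (hπ : QPart ρ n d π)
    (φ : (Fin n → ℕ) → Fin n → ℕ)
    (hφ : ∀ A ∈ π, ∃ y ∈ A, (∀ x ∈ A, blockDist ρ n x y ≤ d) ∧ ∀ x ∈ A, φ x = y)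
    (ε : ℝ≥0∞) (hε : 0 < ε) :
    ∃ ℓ : (Fin n → ℕ) → ℕ, Kraft (Set.range φ) ℓ ∧
      (⨆ μ ∈ Λ, (codeRate φ ℓ (prodPMF μ n) - opRate ρ n d (prodPMF μ n)))
        ≤ (Rplus (prodFam Λ n) π
            + (⨆ μ ∈ Λ, (Hpart π (prodPMF μ n) - (n : ℝ≥0∞) * opRate ρ n d (prodPMF μ n)))
            + 1) / (n : ℝ≥0∞) + ε := by
  classical
  have hpart : IsPartition π := hπ.1
  have hn0 : (n : ℝ≥0∞) ≠ 0 := by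
    simp only [ne_eq, Nat.cast_eq_zero]; omega
  have hnT : (n : ℝ≥0∞) ≠ ⊤ := ENNReal.natCast_ne_top n
  choose Y hY1 hYd hY3 using fun (A : ↥π) => hφ A.1 A.2
  have hcell : ∀ x : Fin n → ℕ, φ x = Y (cellS hpart x) :=
    fun x => hY3 (cellS hpart x) x (mem_cellS hpart x)
  have hcellY : ∀ A : ↥π, cellS hpart (Y A) = A := fun A => cellS_eq hpart (hY1 A)
  have Yinj : Function.Injective Y := fun A B h => by
    rw [← hcellY A, ← hcellY B, h]
  have hφY : ∀ A : ↥π, φ (Y A) = Y A := fun A => by rw [hcell (Y A), hcellY]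
  have hYrange : ∀ A : ↥π, Y A ∈ Set.range φ := fun A => ⟨Y A, hφY A⟩
  have hbij : Function.Bijective (fun A : ↥π => (⟨Y A, hYrange A⟩ : ↥(Set.range φ))) := by
    constructor
    · intro A B h
      exact Yinj (congrArg Subtype.val h)
    · rintro ⟨y, x, rfl⟩
      exact ⟨cellS hpart x, Subtype.ext (hcell x).symm⟩
  -- degenerate cases
  rcases eq_or_ne ε ⊤ with rfl | hεT
  · obtain ⟨ℓ, hℓ⟩ := kraft_exists (Set.range φ)
    exact ⟨ℓ, hℓ, by simp⟩
  rcases eq_or_ne (Rplus (prodFam Λ n) π) ⊤ with hRT | hRT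
  · obtain ⟨ℓ, hℓ⟩ := kraft_exists (Set.range φ)
    refine ⟨ℓ, hℓ, ?_⟩
    rw [hRT, top_add, top_add, ENNReal.top_div_of_ne_top hnT, top_add]
    exact le_top
  -- main case
  set ε' := min ε 1 with hε'def
  have hε'0 : ε' ≠ 0 := (lt_min hε zero_lt_one).ne'
  have hε'T : ε' ≠ ⊤ := ne_top_of_le_one (min_le_right _ _)
  have hε'ε : ε' ≤ ε := min_le_left _ _
  have hε'1 : ε'.toReal ≤ 1 := toReal_le_one (min_le_right _ _)
  set δ := ε'.toReal / 16 with hδdef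
  have hδ0 : 0 < δ := by
    have := ENNReal.toReal_pos hε'0 hε'T
    positivity
  have hδh : δ ≤ 1/2 := by rw [hδdef]; linarith
  -- choose v
  have hγ0 : ε' / 2 ≠ 0 := by
    simp [ENNReal.div_eq_zero_iff, hε'0]
  have hlt : (⨅ v : {v : (Fin n → ℕ) → ℝ≥0∞ // IsPMF v},
      ⨆ μn ∈ prodFam Λ n, Dpart π μn v.1) < Rplus (prodFam Λ n) π + ε' / 2 :=
    ENNReal.lt_add_right hRT hγ0
  obtain ⟨v, hv⟩ := iInf_lt_iff.mp hlt
  -- side measure w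
  obtain ⟨f, hf⟩ := exists_injective_nat (Fin n → ℕ)
  set ι : ↥π → ℕ := fun A => f (Y A) with hιdef
  have hιinj : Function.Injective ι := hf.comp Yinj
  set w : (Fin n → ℕ) → ℝ≥0∞ :=
    Set.indicator (Set.range Y) (fun x => (2⁻¹ : ℝ≥0∞) ^ (ι (cellS hpart x) + 1)) with hwdef
  have hwY : ∀ A : ↥π, w (Y A) = (2⁻¹ : ℝ≥0∞) ^ (ι A + 1) := by
    intro A
    rw [hwdef, Set.indicator_of_mem (Set.mem_range_self A), hcellY]
  have hwAeq : ∀ A : ↥π, measOf w A.1 = (2⁻¹ : ℝ≥0∞) ^ (ι A + 1) := by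
    intro A
    rw [measOf, tsum_eq_single (⟨Y A, hY1 A⟩ : ↥A.1) ?_]
    · exact hwY A
    · rintro ⟨x, hxA⟩ hne
      by_cases hx : x ∈ Set.range Y
      · obtain ⟨B, rfl⟩ := hx
        have hBA : B = A := by rw [← hcellY B]; exact cellS_eq hpart hxA
        exact absurd (Subtype.ext (congrArg Y hBA) : (⟨Y B, hxA⟩ : ↥A.1) = ⟨Y A, hY1 A⟩) hne
      · exact Set.indicator_of_notMem hx _
  have hWsum : ∑' A : ↥π, measOf w A.1 ≤ 1 := by
    calc ∑' A : ↥π, measOf w A.1 = ∑' A : ↥π, (2⁻¹ : ℝ≥0∞) ^ (ι A + 1) := tsum_congr hwAeq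
      _ ≤ ∑' k : ℕ, (2⁻¹ : ℝ≥0∞) ^ (k + 1) :=
          ENNReal.tsum_comp_le_tsum_of_injective hιinj (fun k => (2⁻¹ : ℝ≥0∞) ^ (k + 1))
      _ = 1 := geom_half_succ
  -- mixed reference measure and cell masses
  set v' : (Fin n → ℕ) → ℝ≥0∞ :=
    fun x => ENNReal.ofReal (1-δ) * v.1 x + ENNReal.ofReal δ * w x with hv'def
  set q : ↥π → ℝ≥0∞ := fun A => measOf v' A.1 with hqdef
  have hq_mix : ∀ A : ↥π,
      q A = ENNReal.ofReal (1-δ) * measOf v.1 A.1 + ENNReal.ofReal δ * measOf w A.1 :=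
    fun A => measOf_mix v.1 w _ _ A.1
  have hVsum : ∑' A : ↥π, measOf v.1 A.1 = 1 := (tsum_measOf hpart v.1).trans v.2
  have hQeq : ∑' A : ↥π, q A
      = ENNReal.ofReal (1-δ) + ENNReal.ofReal δ * ∑' A : ↥π, measOf w A.1 := by
    calc ∑' A : ↥π, q A
        = ∑' A : ↥π, (ENNReal.ofReal (1-δ) * measOf v.1 A.1
            + ENNReal.ofReal δ * measOf w A.1) := tsum_congr hq_mix
      _ = ENNReal.ofReal (1-δ) * (∑' A : ↥π, measOf v.1 A.1)
          + ENNReal.ofReal δ * ∑' A : ↥π, measOf w A.1 := by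
          rw [ENNReal.tsum_add, ENNReal.tsum_mul_left, ENNReal.tsum_mul_left]
      _ = _ := by rw [hVsum, mul_one]
  have hofadd : ENNReal.ofReal (1-δ) + ENNReal.ofReal δ = 1 := by
    rw [← ENNReal.ofReal_add (by linarith) hδ0.le]
    norm_num
  have hQle : ∑' A : ↥π, q A ≤ 1 := by
    rw [hQeq]
    calc ENNReal.ofReal (1-δ) + ENNReal.ofReal δ * ∑' A : ↥π, measOf w A.1
        ≤ ENNReal.ofReal (1-δ) + ENNReal.ofReal δ * 1 :=
          add_le_add_right (mul_le_mul_right hWsum _) _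
      _ = 1 := by rw [mul_one, hofadd]
  have hQge : ENNReal.ofReal (1-δ) ≤ ∑' A : ↥π, q A := by
    rw [hQeq]; exact self_le_add_right _ _
  have hq1 : ∀ A, q A ≤ 1 := fun A => le_trans (ENNReal.le_tsum A) hQle
  have hq0 : ∀ A, q A ≠ 0 := by
    intro A h
    rw [hq_mix A] at h
    rcases add_eq_zero.mp h with ⟨_, h2⟩
    rcases mul_eq_zero.mp h2 with h3 | h3
    · rw [ENNReal.ofReal_eq_zero] at h3; linarith
    · rw [hwAeq A] at h3
      exact pow_ne_zero _ (ENNReal.inv_ne_zero.mpr (by norm_num)) h3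
  -- the length function
  set ℓ : (Fin n → ℕ) → ℕ := fun x => lenOf (q (cellS hpart x)) with hℓdef
  have hℓY : ∀ A : ↥π, ℓ (Y A) = lenOf (q A) := by
    intro A
    rw [hℓdef]
    simp only
    rw [hcellY]
  have hKraft : Kraft (Set.range φ) ℓ := by
    unfold Kraft
    calc (∑' y : ↥(Set.range φ), (2⁻¹ : ℝ≥0∞) ^ ℓ y.1)
        = ∑' A : ↥π, (2⁻¹ : ℝ≥0∞) ^ ℓ (Y A) :=
          (Equiv.tsum_eq (Equiv.ofBijective _ hbij)
            (fun y : ↥(Set.range φ) => (2⁻¹ : ℝ≥0∞) ^ ℓ y.1)).symm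
      _ = ∑' A : ↥π, (2⁻¹ : ℝ≥0∞) ^ lenOf (q A) := tsum_congr (fun A => by rw [hℓY A])
      _ ≤ ∑' A : ↥π, q A := kraft_core q hq0 hq1
      _ ≤ 1 := hQle
  refine ⟨ℓ, hKraft, ?_⟩
  apply iSup₂_le
  intro μ hμ
  set μn := prodPMF μ n with hμndef
  have hμnPMF : IsPMF μn := prodPMF_isPMF (hΛ μ hμ) n
  set p : ↥π → ℝ≥0∞ := fun A => measOf μn A.1 with hpdef
  have hpsum : ∑' A : ↥π, p A = 1 := (tsum_measOf hpart μn).trans hμnPMF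
  set R := opRate ρ n d μn with hRdef
  set S := Hpart π μn - (n : ℝ≥0∞) * R with hSdef
  set Ssup := ⨆ μ' ∈ Λ, (Hpart π (prodPMF μ' n) - (n : ℝ≥0∞) * opRate ρ n d (prodPMF μ' n))
    with hSsupdef
  have hSle : S ≤ Ssup := by
    rw [hSsupdef]
    exact le_iSup₂ (f := fun μ' (_ : μ' ∈ Λ) =>
      Hpart π (prodPMF μ' n) - (n : ℝ≥0∞) * opRate ρ n d (prodPMF μ' n)) μ hμ
  have hHeq : Hpart π μn = ∑' A : ↥π, entTerm (p A) := rfl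
  have hNum : (∑' x, μn x * (ℓ (φ x) : ℝ≥0∞)) = ∑' A : ↥π, p A * (lenOf (q A) : ℝ≥0∞) := by
    rw [tsum_partition hpart (fun x => μn x * (ℓ (φ x) : ℝ≥0∞))]
    apply tsum_congr
    intro A
    have hstep : ∀ x : ↥A.1, μn x.1 * (ℓ (φ x.1) : ℝ≥0∞) = μn x.1 * (lenOf (q A) : ℝ≥0∞) := by
      intro x
      rw [hcell x.1, cellS_eq hpart x.2, hℓY A]
    rw [tsum_congr hstep, ENNReal.tsum_mul_right]
    rfl
  have hcore := core p q hpsum hq0 hq1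
  set Qs := ∑' A : ↥π, q A with hQsdef
  have hQc2T : Qs * c2 ≠ ⊤ := ENNReal.mul_ne_top (ne_top_of_le_one hQle) c2_ne_top
  have hNum2 : (∑' A : ↥π, p A * (lenOf (q A) : ℝ≥0∞))
      ≤ (∑' A : ↥π, klTerm (p A) (q A)) + Hpart π μn + 1 + (c2 - Qs * c2) := by
    rw [← ENNReal.add_le_add_iff_right hQc2T]
    calc (∑' A : ↥π, p A * (lenOf (q A) : ℝ≥0∞)) + Qs * c2
        ≤ (∑' A : ↥π, klTerm (p A) (q A)) + (∑' A : ↥π, entTerm (p A)) + 1 + c2 := hcore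
      _ ≤ (∑' A : ↥π, klTerm (p A) (q A)) + (∑' A : ↥π, entTerm (p A)) + 1
          + ((c2 - Qs * c2) + Qs * c2) := add_le_add_right le_tsub_add _
      _ = (∑' A : ↥π, klTerm (p A) (q A)) + Hpart π μn + 1 + (c2 - Qs * c2) + Qs * c2 := by
          rw [hHeq]; ring
  have hslack : c2 - Qs * c2 ≤ ENNReal.ofReal δ * c2 := by
    rw [tsub_le_iff_right]
    calc c2 = 1 * c2 := (one_mul _).symm
      _ = (ENNReal.ofReal δ + ENNReal.ofReal (1-δ)) * c2 := by rw [add_comm, hofadd]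
      _ ≤ (ENNReal.ofReal δ + Qs) * c2 := mul_le_mul_left (add_le_add_right hQge _) _
      _ = ENNReal.ofReal δ * c2 + Qs * c2 := by rw [add_mul]
  have hb1 : ∀ A : ↥π, measOf v.1 A.1 ≤ 1 := fun A => measOf_le_one v.2 _
  have hw1 : ∀ A : ↥π, measOf w A.1 ≤ 1 := fun A => le_trans (ENNReal.le_tsum A) hWsum
  have hp1 : ∀ A, p A ≤ 1 := fun A => hpsum ▸ ENNReal.le_tsum A
  have hmid : (∑' A : ↥π, p A * ENNReal.ofReal (2*δ) * c2) = ENNReal.ofReal (2*δ) * c2 := by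
    simp_rw [mul_assoc]
    rw [ENNReal.tsum_mul_right, hpsum, one_mul]
  have hthird : (∑' A : ↥π, ENNReal.ofReal δ * measOf w A.1 * c2) ≤ ENNReal.ofReal δ * c2 := by
    calc (∑' A : ↥π, ENNReal.ofReal δ * measOf w A.1 * c2)
        = ∑' A : ↥π, (ENNReal.ofReal δ * c2) * measOf w A.1 :=
          tsum_congr (fun A => by ring)
      _ = (ENNReal.ofReal δ * c2) * ∑' A : ↥π, measOf w A.1 := ENNReal.tsum_mul_left
      _ ≤ (ENNReal.ofReal δ * c2) * 1 := mul_le_mul_right hWsum _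
      _ = ENNReal.ofReal δ * c2 := mul_one _
  have hD' : (∑' A : ↥π, klTerm (p A) (q A))
      ≤ Dpart π μn v.1 + (ENNReal.ofReal (2*δ) * c2 + ENNReal.ofReal δ * c2) := by
    calc (∑' A : ↥π, klTerm (p A) (q A))
        ≤ ∑' A : ↥π, (klTerm (p A) (measOf v.1 A.1) + p A * ENNReal.ofReal (2*δ) * c2
            + ENNReal.ofReal δ * measOf w A.1 * c2) := by
          apply ENNReal.tsum_le_tsum
          intro A
          rw [hq_mix A]
          exact kl_mix (hp1 A) (hb1 A) (hw1 A) hδ0 hδh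
      _ = (∑' A : ↥π, klTerm (p A) (measOf v.1 A.1))
          + (∑' A : ↥π, p A * ENNReal.ofReal (2*δ) * c2)
          + (∑' A : ↥π, ENNReal.ofReal δ * measOf w A.1 * c2) := by
          rw [ENNReal.tsum_add, ENNReal.tsum_add]
      _ ≤ Dpart π μn v.1 + ENNReal.ofReal (2*δ) * c2 + ENNReal.ofReal δ * c2 := by
          rw [hmid]
          exact add_le_add (add_le_add le_rfl le_rfl) hthird
      _ = Dpart π μn v.1 + (ENNReal.ofReal (2*δ) * c2 + ENNReal.ofReal δ * c2) := by ring
  have hc2le2 : c2 ≤ 2 := by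
    rw [c2]
    calc ENNReal.ofReal (Real.log 2)⁻¹ ≤ ENNReal.ofReal 2 := by
          apply ENNReal.ofReal_le_ofReal
          rw [inv_le_comm₀ log2_pos (by norm_num)]
          have := Real.log_two_gt_d9
          linarith
      _ = 2 := ENNReal.ofReal_ofNat 2
  have hδsum : ENNReal.ofReal (2*δ) * c2 + ENNReal.ofReal δ * c2 + ENNReal.ofReal δ * c2
      ≤ ε' / 2 := by
    have h4 : ENNReal.ofReal (2*δ) * c2 + ENNReal.ofReal δ * c2 + ENNReal.ofReal δ * c2
        = ENNReal.ofReal (4*δ) * c2 := by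
      rw [← add_mul, ← add_mul, ← ENNReal.ofReal_add (by positivity) hδ0.le,
        ← ENNReal.ofReal_add (by positivity) hδ0.le]
      ring_nf
    rw [h4]
    calc ENNReal.ofReal (4*δ) * c2 ≤ ENNReal.ofReal (4*δ) * 2 := mul_le_mul_right hc2le2 _
      _ = ENNReal.ofReal (8*δ) := by
          rw [← ENNReal.ofReal_ofNat 2, ← ENNReal.ofReal_mul (by positivity)]
          ring_nf
      _ = ε' / 2 := by
          rw [hδdef, show (8:ℝ) * (ε'.toReal/16) = ε'.toReal / 2 by ring,
            ENNReal.ofReal_div_of_pos two_pos, ENNReal.ofReal_toReal hε'T,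
            ENNReal.ofReal_ofNat 2]
  have hv_le : Dpart π μn v.1 ≤ Rplus (prodFam Λ n) π + ε' / 2 := by
    refine le_trans ?_ hv.le
    exact le_iSup₂ (f := fun μn' (_ : μn' ∈ prodFam Λ n) => Dpart π μn' v.1)
      μn ⟨μ, hμ, rfl⟩
  have hH : Hpart π μn ≤ S + (n : ℝ≥0∞) * R := le_tsub_add
  have hfinal : (∑' x, μn x * (ℓ (φ x) : ℝ≥0∞))
      ≤ (Rplus (prodFam Λ n) π + Ssup + 1 + ε') + (n : ℝ≥0∞) * R := by
    rw [hNum]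
    have hhalf : ε' / 2 + ε' / 2 = ε' := ENNReal.add_halves ε'
    calc (∑' A : ↥π, p A * (lenOf (q A) : ℝ≥0∞))
        ≤ (∑' A : ↥π, klTerm (p A) (q A)) + Hpart π μn + 1 + (c2 - Qs * c2) := hNum2
      _ ≤ (Dpart π μn v.1 + (ENNReal.ofReal (2*δ) * c2 + ENNReal.ofReal δ * c2))
          + (S + (n : ℝ≥0∞) * R) + 1 + ENNReal.ofReal δ * c2 :=
          add_le_add (add_le_add (add_le_add hD' hH) le_rfl) hslack
      _ = Dpart π μn v.1 + S + 1
          + (ENNReal.ofReal (2*δ) * c2 + ENNReal.ofReal δ * c2 + ENNReal.ofReal δ * c2)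
          + (n : ℝ≥0∞) * R := by ring
      _ ≤ (Rplus (prodFam Λ n) π + ε' / 2) + Ssup + 1 + ε' / 2 + (n : ℝ≥0∞) * R :=
          add_le_add (add_le_add (add_le_add (add_le_add hv_le hSle) le_rfl) hδsum) le_rfl
      _ = (Rplus (prodFam Λ n) π + Ssup + 1 + (ε' / 2 + ε' / 2)) + (n : ℝ≥0∞) * R := by
          ring
      _ = (Rplus (prodFam Λ n) π + Ssup + 1 + ε') + (n : ℝ≥0∞) * R := by
          rw [hhalf]
  have hcr : codeRate φ ℓ μn = (∑' x, μn x * (ℓ (φ x) : ℝ≥0∞)) / (n : ℝ≥0∞) := rfl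
  have hdivle : codeRate φ ℓ μn ≤ (Rplus (prodFam Λ n) π + Ssup + 1) / (n : ℝ≥0∞) + ε + R := by
    rw [hcr]
    calc (∑' x, μn x * (ℓ (φ x) : ℝ≥0∞)) / (n : ℝ≥0∞)
        ≤ ((Rplus (prodFam Λ n) π + Ssup + 1 + ε') + (n : ℝ≥0∞) * R) / (n : ℝ≥0∞) :=
          ENNReal.div_le_div_right hfinal _
      _ = (Rplus (prodFam Λ n) π + Ssup + 1) / (n : ℝ≥0∞) + ε' / (n : ℝ≥0∞)
          + ((n : ℝ≥0∞) * R) / (n : ℝ≥0∞) := by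
          rw [ENNReal.add_div, ENNReal.add_div]
      _ ≤ (Rplus (prodFam Λ n) π + Ssup + 1) / (n : ℝ≥0∞) + ε + R := by
          refine add_le_add (add_le_add le_rfl ?_) ?_
          · calc ε' / (n : ℝ≥0∞) = ε' * (n : ℝ≥0∞)⁻¹ := div_eq_mul_inv _ _
              _ ≤ ε' * 1 := mul_le_mul_right
                  (ENNReal.inv_le_one.mpr (by exact_mod_cast hn)) _
              _ = ε' := mul_one _
              _ ≤ ε := hε'ε
          · rw [mul_comm, mul_div_assoc, ENNReal.div_self hn0 hnT, mul_one]
  exact tsub_le_iff_right.mpr hdivle
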